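/- Consider minimizing f(x₁,x₂) = m·x₁ + x₂ subject to (n₁(n₁−1)n₂/(√2·P))² ≤ x₁²·x₂, 0 ≤ x₁, and n₁(n₁−1)/(2P) ≤ x₂ ≤ n₁(n₁−1)/2, where P ≥ 1 and n₁, n₂ are positive integers and m > 0. If n₁ ≤ m·n₂ and P ≤ m·n₂/√(n₁(n₁−1)), then the minimum value is m·n₂·√(n₁(n₁−1))/P + n₁(n₁−1)/2, attained at x₁ = n₂·√(n₁(n₁−1))/P and x₂ = n₁(n₁−1)/2. -/

import Mathlib

set_option maxHeartbeats 1000000 in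
theorem stmt_5 (m P : ℝ) (n₁ n₂ : ℕ) (hm : 0 < m) (hn₁ : 0 < n₁) (hn₂ : 0 < n₂)
    (hP : 1 ≤ P)
    (hcase₁ : (n₁ : ℝ) ≤ m * n₂)
    (hcase₂ : P ≤ m * n₂ / Real.sqrt ((n₁ : ℝ) * (n₁ - 1))) :
    (∀ x₁ x₂ : ℝ,
      ((n₁ : ℝ) * (n₁ - 1) * n₂ / (Real.sqrt 2 * P)) ^ 2 ≤ x₁ ^ 2 * x₂ →
      0 ≤ x₁ →
      (n₁ : ℝ) * (n₁ - 1) / (2 * P) ≤ x₂ →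
      x₂ ≤ (n₁ : ℝ) * (n₁ - 1) / 2 →
      m * n₂ * Real.sqrt ((n₁ : ℝ) * (n₁ - 1)) / P + (n₁ : ℝ) * (n₁ - 1) / 2 ≤
        m * x₁ + x₂) ∧
    (((n₁ : ℝ) * (n₁ - 1) * n₂ / (Real.sqrt 2 * P)) ^ 2 ≤
        ((n₂ : ℝ) * Real.sqrt ((n₁ : ℝ) * (n₁ - 1)) / P) ^ 2 * ((n₁ : ℝ) * (n₁ - 1) / 2) ∧
      0 ≤ (n₂ : ℝ) * Real.sqrt ((n₁ : ℝ) * (n₁ - 1)) / P ∧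
      (n₁ : ℝ) * (n₁ - 1) / (2 * P) ≤ (n₁ : ℝ) * (n₁ - 1) / 2 ∧
      m * ((n₂ : ℝ) * Real.sqrt ((n₁ : ℝ) * (n₁ - 1)) / P) + (n₁ : ℝ) * (n₁ - 1) / 2 =
        m * n₂ * Real.sqrt ((n₁ : ℝ) * (n₁ - 1)) / P + (n₁ : ℝ) * (n₁ - 1) / 2) := by
  have hP0 : (0:ℝ) < P := lt_of_lt_of_le one_pos hP
  have hn : 2 ≤ n₁ := by
    by_contra h
    push_neg at h
    interval_cases n₁
    · norm_num at hcase₂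
      linarith
  set s : ℝ := (n₁ : ℝ) * ((n₁ : ℝ) - 1) with hs_def
  have hn' : (2:ℝ) ≤ (n₁ : ℝ) := by exact_mod_cast hn
  have hs : 0 < s := by nlinarith
  have hsqs : Real.sqrt s ^ 2 = s := Real.sq_sqrt hs.le
  have hsqs_pos : 0 < Real.sqrt s := Real.sqrt_pos.2 hs
  have hsq2 : Real.sqrt 2 ^ 2 = 2 := Real.sq_sqrt (by norm_num)
  have hsq2_pos : 0 < Real.sqrt 2 := Real.sqrt_pos.2 (by norm_num)
  have hkey : Real.sqrt s * P ≤ m * n₂ := by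
    rw [le_div_iff₀ hsqs_pos] at hcase₂; linarith
  have hn₂' : (0:ℝ) < (n₂ : ℝ) := by exact_mod_cast hn₂
  constructor
  · intro x₁ x₂ hc hx₁ hlo hhi
    have hx₂pos : 0 < x₂ := lt_of_lt_of_le (by positivity) hlo
    set u := Real.sqrt x₂ with hu_def
    set v := Real.sqrt (s / 2) with hv_def
    have hu : u ^ 2 = x₂ := Real.sq_sqrt hx₂pos.le
    have hv : v ^ 2 = s / 2 := Real.sq_sqrt (by positivity)
    have hupos : 0 < u := Real.sqrt_pos.2 hx₂pos
    have hvpos : 0 < v := Real.sqrt_pos.2 (by positivity)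
    have huv : u ≤ v := Real.sqrt_le_sqrt (by linarith)
    have hvsq2 : v * Real.sqrt 2 = Real.sqrt s := by
      rw [hv_def, ← Real.sqrt_mul (by positivity), div_mul_cancel₀]
      norm_num
    have hx₁u : s * n₂ / (Real.sqrt 2 * P) ≤ x₁ * u := by
      have h1 : (0:ℝ) ≤ s * n₂ / (Real.sqrt 2 * P) := by positivity
      calc s * n₂ / (Real.sqrt 2 * P)
          = Real.sqrt ((s * n₂ / (Real.sqrt 2 * P)) ^ 2) := (Real.sqrt_sq h1).symm
        _ ≤ Real.sqrt (x₁ ^ 2 * x₂) := Real.sqrt_le_sqrt hc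
        _ = x₁ * u := by rw [Real.sqrt_mul (sq_nonneg x₁), Real.sqrt_sq hx₁]
    have h1 : s * n₂ ≤ x₁ * u * (Real.sqrt 2 * P) := by
      rwa [div_le_iff₀ (by positivity)] at hx₁u
    have hkey' : v * Real.sqrt 2 * P ≤ m * n₂ := by rw [hvsq2]; exact hkey
    have e2 : Real.sqrt 2 * Real.sqrt 2 = 2 := Real.mul_self_sqrt (by norm_num)
    have h1m : m * (s * n₂) ≤ m * (x₁ * u * (Real.sqrt 2 * P)) :=
      mul_le_mul_of_nonneg_left h1 hm.le
    have h1m2 : Real.sqrt 2 * (m * (s * n₂)) ≤ Real.sqrt 2 * (m * (x₁ * u * (Real.sqrt 2 * P))) :=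
      mul_le_mul_of_nonneg_left h1m (Real.sqrt_nonneg 2)
    have eA : Real.sqrt 2 * (m * (x₁ * u * (Real.sqrt 2 * P))) = 2 * (m * x₁ * P * u) := by
      linear_combination (m * x₁ * u * P) * e2
    have eB : Real.sqrt 2 * (m * (s * n₂)) = 2 * (Real.sqrt 2 * (m * v ^ 2 * n₂)) := by
      linear_combination (-(2 * Real.sqrt 2 * m * n₂)) * hv
    have fact1 : Real.sqrt 2 * (m * v ^ 2 * n₂) ≤ m * x₁ * P * u := by
      rw [eA, eB] at h1m2; linarith
    have i1 : Real.sqrt 2 * v * (v * Real.sqrt 2 * P) ≤ Real.sqrt 2 * v * (m * n₂) :=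
      mul_le_mul_of_nonneg_left hkey' (by positivity)
    have i2 : Real.sqrt 2 * v * (v * Real.sqrt 2 * P) = 2 * (v ^ 2 * P) := by
      linear_combination (v ^ 2 * P) * e2
    have i3 : (v + u) * u * P ≤ 2 * (v ^ 2 * P) := by
      nlinarith [mul_nonneg (mul_nonneg (sub_nonneg.2 huv)
        (by linarith : (0:ℝ) ≤ 2 * v + u)) hP0.le]
    have inner : 0 ≤ Real.sqrt 2 * (m * n₂) * v - (v + u) * u * P := by
      rw [i2] at i1; nlinarith [i1, i3]
    have fact2 : 0 ≤ Real.sqrt 2 * (m * n₂) * v ^ 2 - Real.sqrt 2 * (m * n₂) * v * u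
        + u ^ 3 * P - v ^ 2 * u * P := by
      nlinarith [mul_nonneg (sub_nonneg.2 huv) inner]
    have hgoal' : m * n₂ * Real.sqrt s / P ≤ m * x₁ + x₂ - s / 2 := by
      rw [div_le_iff₀ hP0, ← hvsq2, ← hu, ← hv, ← mul_le_mul_iff_of_pos_right hupos]
      nlinarith [fact1, fact2]
    linarith
  · refine ⟨le_of_eq ?_, by positivity, ?_, by ring⟩
    · have h2 : (Real.sqrt 2 * P) ^ 2 = 2 * P ^ 2 := by rw [mul_pow, hsq2]
      have h3 : ((n₂:ℝ) * Real.sqrt s) ^ 2 = (n₂:ℝ) ^ 2 * s := by rw [mul_pow, hsqs]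
      rw [div_pow, h2, div_pow, h3]
      field_simp
    · rw [div_le_div_iff₀ (by positivity) (by norm_num)]
      nlinarith
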